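/- Let p be a prime, t ≥ 1, u ≥ 1, m ≥ 1 integers with u not dividing m, c ∈ ℚ_p nonzero, and θ ∈ ℤ_p not equal to the image of any natural number. Then the sequence (ν_{p^t}(c·(n−θ)^m) mod u)_{n≥0}, with values in ℤ/uℤ, is not eventually periodic. -/

import Mathlib

/-- The `k`-kernel of a sequence: the set of subsequences `n ↦ a (k^i·n + j)`
for `i ≥ 0` and `0 ≤ j ≤ k^i - 1`. -/
def kKernel {R : Type*} (k : ℕ) (a : ℕ → R) : Set (ℕ → R) :=
  {c | ∃ i j : ℕ, j < k ^ i ∧ c = fun n => a (k ^ i * n + j)}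

/-- A sequence is `k`-automatic if its `k`-kernel is a finite set. -/
def IsKAutomatic {R : Type*} (k : ℕ) (a : ℕ → R) : Prop :=
  (kKernel k a).Finite

/-- A sequence with values in a `ℤ`-module is `k`-regular if the `ℤ`-submodule
of the module of all sequences generated by its `k`-kernel is finitely generated. -/
def IsKRegular {R : Type*} [AddCommGroup R] (k : ℕ) (a : ℕ → R) : Prop :=
  (Submodule.span ℤ (kKernel k a)).FG

/-- `k` and `m` are multiplicatively independent if `k^a = m^b` forces `a = b = 0`. -/
def MultiplicativelyIndependent (k m : ℕ) : Prop :=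
  ∀ a b : ℕ, k ^ a = m ^ b → a = 0 ∧ b = 0

/-- Strictly `k`-regular: `k`-regular but not `m`-regular for every `m ≥ 2`
multiplicatively independent of `k`. -/
def StrictlyKRegular {R : Type*} [AddCommGroup R] (k : ℕ) (a : ℕ → R) : Prop :=
  IsKRegular k a ∧ ∀ m : ℕ, 2 ≤ m → MultiplicativelyIndependent k m → ¬ IsKRegular m a

/-- Strictly `k`-automatic: `k`-automatic but not `m`-automatic for every `m ≥ 2`
multiplicatively independent of `k`. -/
def StrictlyKAutomatic {R : Type*} (k : ℕ) (a : ℕ → R) : Prop :=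
  IsKAutomatic k a ∧ ∀ m : ℕ, 2 ≤ m → MultiplicativelyIndependent k m → ¬ IsKAutomatic m a

/-- `f : ℤ_p → ℚ_p` is analytic if it is given by a power series converging
(to `f x`) at every point `x ∈ ℤ_p`. -/
def IsPadicAnalytic {p : ℕ} [Fact p.Prime] (f : ℤ_[p] → ℚ_[p]) : Prop :=
  ∃ c : ℕ → ℚ_[p], ∀ x : ℤ_[p], HasSum (fun i => c i * (x : ℚ_[p]) ^ i) (f x)

/-- The set of roots of `f` in `ℤ_p`. -/
def padicRootSet {p : ℕ} [Fact p.Prime] (f : ℤ_[p] → ℚ_[p]) : Set ℤ_[p] :=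
  {θ | f θ = 0}

/-- A `p`-adic integer is rational if it is the image of a rational number. -/
def IsRationalPadicInt {p : ℕ} [Fact p.Prime] (θ : ℤ_[p]) : Prop :=
  ∃ q : ℚ, (θ : ℚ_[p]) = (q : ℚ_[p])

/-- `θ` is a root of `f` of multiplicity `m`:
`f x = (x - θ)^m · g x` with `g` analytic and `g θ ≠ 0`. -/
def HasRootMultiplicity {p : ℕ} [Fact p.Prime] (f : ℤ_[p] → ℚ_[p]) (θ : ℤ_[p]) (m : ℕ) : Prop :=
  ∃ g : ℤ_[p] → ℚ_[p], IsPadicAnalytic g ∧ g θ ≠ 0 ∧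
    ∀ x : ℤ_[p], f x = ((x : ℚ_[p]) - (θ : ℚ_[p])) ^ m * g x

/-- `ν_{p^l}(x) = ⌊ν_p(x)/l⌋` (with junk value `0` at `x = 0`). -/
noncomputable def nuPow (p : ℕ) [Fact p.Prime] (l : ℕ) (x : ℚ_[p]) : ℤ :=
  x.valuation / (l : ℤ)

open Classical in
/-- `ℒ_{p^l}(x) = p^{-l·ν_{p^l}(x)}·x ∈ ℤ_p`, with `ℒ_{p^l}(0) = 0`. -/
noncomputable def padicL (p : ℕ) [hp : Fact p.Prime] (l : ℕ) (x : ℚ_[p]) : ℤ_[p] :=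
  if h : x = 0 ∨ l = 0 then 0
  else ⟨(p : ℚ_[p]) ^ (-((l : ℤ) * nuPow p l x)) * x, by
    push_neg at h
    obtain ⟨hx, hl⟩ := h
    have hp0 : (p : ℚ_[p]) ≠ 0 := Nat.cast_ne_zero.mpr hp.out.ne_zero
    have hz : (p : ℚ_[p]) ^ (-((l : ℤ) * nuPow p l x)) ≠ 0 := zpow_ne_zero _ hp0
    rw [Padic.norm_le_one_iff_val_nonneg, Padic.valuation_mul hz hx]
    have hvz : ((p : ℚ_[p]) ^ (-((l : ℤ) * nuPow p l x))).valuation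
        = -((l : ℤ) * nuPow p l x) := by
      have h1 : ‖(p : ℚ_[p]) ^ (-((l : ℤ) * nuPow p l x))‖
          = (p : ℝ) ^ (-(-((l : ℤ) * nuPow p l x))) := Padic.norm_p_zpow _
      rw [Padic.norm_eq_zpow_neg_valuation hz] at h1
      have h1p : 1 < (p : ℝ) := by exact_mod_cast hp.out.one_lt
      have := (zpow_right_strictMono₀ h1p).injective h1
      omega
    rw [hvz, nuPow]
    have hl' : (0 : ℤ) < (l : ℤ) := by exact_mod_cast Nat.pos_of_ne_zero hl
    have := Int.emod_nonneg x.valuation (by exact_mod_cast hl : (l : ℤ) ≠ 0)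
    have heq := Int.emod_add_mul_ediv x.valuation (l : ℤ)
    omega⟩

/-- `ℓ_{p^l,d}(x) = ℒ_{p^l}(x) mod p^{ld} ∈ ℤ/p^{ld}ℤ`. -/
noncomputable def padicEll (p : ℕ) [Fact p.Prime] (l d : ℕ) (x : ℚ_[p]) : ZMod (p ^ (l * d)) :=
  PadicInt.toZModPow (l * d) (padicL p l x)

/-- A sequence is eventually periodic. -/
def EventuallyPeriodic {R : Type*} (a : ℕ → R) : Prop :=
  ∃ T : ℕ, 1 ≤ T ∧ ∃ N : ℕ, ∀ n : ℕ, N ≤ n → a (n + T) = a n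

section helpers
variable {p : ℕ} [hp : Fact p.Prime]

variable {p : ℕ} [hp : Fact p.Prime]

lemma val_eq_of_norm {x : ℚ_[p]} (hx : x ≠ 0) {k : ℤ} (h : ‖x‖ = (p:ℝ) ^ (-k)) :
    x.valuation = k := by
  rw [Padic.norm_eq_zpow_neg_valuation hx] at h
  have h1p : 1 < (p : ℝ) := by exact_mod_cast hp.out.one_lt
  have := (zpow_right_strictMono₀ h1p).injective h
  omega

lemma valuation_pow' {x : ℚ_[p]} (hx : x ≠ 0) (m : ℕ) :
    (x ^ m).valuation = m * x.valuation := by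
  induction m with
  | zero => simp [Padic.valuation_one]
  | succ k ih =>
      rw [pow_succ, Padic.valuation_mul (pow_ne_zero _ hx) hx, ih]
      push_cast; ring

lemma exists_good_n (θ : ℤ_[p]) (K N : ℕ) :
    ∃ n : ℕ, N ≤ n ∧ ‖(n : ℤ_[p]) - θ‖ = (p:ℝ) ^ (-(K:ℤ)) := by
  classical
  obtain ⟨θ', hθ'⟩ := Ideal.mem_span_singleton.mp (PadicInt.appr_spec K θ)
  obtain ⟨z, hz⟩ := Ideal.mem_span_singleton.mp (PadicInt.appr_spec 1 θ')
  set d := θ'.appr 1 with hd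
  set j : ℕ := d + 1 + p * N with hj
  refine ⟨θ.appr K + p ^ K * j, ?_, ?_⟩
  · have hp1 : 1 ≤ p := hp.out.one_lt.le
    calc N ≤ p * N := Nat.le_mul_of_pos_left _ hp.out.pos
    _ ≤ j := by omega
    _ ≤ p ^ K * j := Nat.le_mul_of_pos_left _ (pow_pos hp.out.pos K)
    _ ≤ _ := by omega
  · have key : ((θ.appr K + p ^ K * j : ℕ) : ℤ_[p]) - θ = (p : ℤ_[p]) ^ K * ((j : ℤ_[p]) - θ') := by
      push_cast
      linear_combination -hθ'
    rw [key, norm_mul, PadicInt.norm_p_pow]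
    have hunit : ‖(j : ℤ_[p]) - θ'‖ = 1 := by
      have hform : (j : ℤ_[p]) - θ' = 1 + (p : ℤ_[p]) * ((N : ℤ_[p]) - z) := by
        have h2 : θ' = (d : ℤ_[p]) + (p:ℤ_[p]) * z := by
          have := hz; simp at this; linear_combination this
        rw [h2, hj]; push_cast; ring
      rw [hform]
      have hlt : ‖(p : ℤ_[p]) * ((N : ℤ_[p]) - z)‖ < 1 := by
        rw [norm_mul, PadicInt.norm_p]
        calc (p:ℝ)⁻¹ * ‖(N : ℤ_[p]) - z‖ ≤ (p:ℝ)⁻¹ * 1 :=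
              mul_le_mul_of_nonneg_left (PadicInt.norm_le_one _) (by positivity)
        _ < 1 := by
              rw [mul_one, inv_lt_one_iff₀]
              right; exact_mod_cast hp.out.one_lt
      have hne : ‖(1 : ℤ_[p])‖ ≠ ‖(p : ℤ_[p]) * ((N : ℤ_[p]) - z)‖ := by
        rw [norm_one]; exact (ne_of_lt hlt).symm
      rw [PadicInt.norm_add_eq_max_of_ne hne, norm_one, max_eq_left hlt.le]
    rw [hunit, mul_one]

end helpers

/-- If `u ∤ m` and `θ ∈ ℤ_p` is not a natural number, the sequence
`(ν_{p^t}(c(n-θ)^m) mod u)_n` is not eventually periodic. -/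
theorem statement15 (p : ℕ) [Fact p.Prime] (t u m : ℕ) (ht : 1 ≤ t) (hu : 1 ≤ u)
    (hm : 1 ≤ m) (hum : ¬ u ∣ m) (c : ℚ_[p]) (hc : c ≠ 0) (θ : ℤ_[p])
    (hθ : ∀ n : ℕ, θ ≠ (n : ℤ_[p])) :
    ¬ EventuallyPeriodic
      (fun n : ℕ => ((nuPow p t (c * ((n : ℚ_[p]) - (θ : ℚ_[p])) ^ m) : ZMod u))) := by
  rintro ⟨T, hT1, N, hper⟩
  haveI : NeZero u := ⟨by omega⟩
  have hp' : Fact p.Prime := ‹_›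
  have hval : ∀ n : ℕ, ∀ k : ℤ, ((n : ℚ_[p]) - (θ : ℚ_[p])) ≠ 0 →
      ((n : ℚ_[p]) - (θ : ℚ_[p])).valuation = k →
      nuPow p t (c * ((n : ℚ_[p]) - (θ : ℚ_[p])) ^ m) = (c.valuation + m * k) / t := by
    intro n k hne hk
    unfold nuPow
    rw [Padic.valuation_mul hc (pow_ne_zero _ hne), valuation_pow' hne, hk]
  have hTne : ((T : ℚ_[p])) ≠ 0 := Nat.cast_ne_zero.mpr (by omega)
  set s : ℤ := (T : ℚ_[p]).valuation with hs
  have hnormT : ‖(T : ℚ_[p])‖ = (p : ℝ) ^ (-s) := Padic.norm_eq_zpow_neg_valuation hTne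
  have hp1 : 1 < (p : ℝ) := by exact_mod_cast hp'.out.one_lt
  -- key: the value is eventually constant in K
  have hconst : ∀ K' : ℕ, s < (K' : ℤ) →
      (((c.valuation + m * K') / t : ℤ) : ZMod u)
        = (((c.valuation + m * s) / t : ℤ) : ZMod u) := by
    intro K' hK'
    obtain ⟨n, hnN, hnorm⟩ := exists_good_n θ K' N
    have hnormQ : ‖(n : ℚ_[p]) - (θ : ℚ_[p])‖ = (p : ℝ) ^ (-(K' : ℤ)) := by
      have h' : ‖(((n : ℤ_[p]) - θ : ℤ_[p]) : ℚ_[p])‖ = (p : ℝ) ^ (-(K' : ℤ)) := by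
        rw [← PadicInt.norm_def]; exact hnorm
      push_cast at h'
      exact h'
    have hne1 : (n : ℚ_[p]) - (θ : ℚ_[p]) ≠ 0 := by
      intro h; rw [h, norm_zero] at hnormQ
      exact absurd hnormQ.symm (ne_of_gt (by positivity))
    have hv1 : ((n : ℚ_[p]) - (θ : ℚ_[p])).valuation = (K' : ℤ) :=
      val_eq_of_norm hne1 hnormQ
    -- valuation at n + T
    have hnormne : ‖(n : ℚ_[p]) - (θ : ℚ_[p])‖ ≠ ‖(T : ℚ_[p])‖ := by
      rw [hnormQ, hnormT]
      intro h
      have := (zpow_right_strictMono₀ hp1).injective h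
      omega
    have hform : ((n + T : ℕ) : ℚ_[p]) - (θ : ℚ_[p])
        = ((n : ℚ_[p]) - (θ : ℚ_[p])) + (T : ℚ_[p]) := by push_cast; ring
    have hnorm2 : ‖((n + T : ℕ) : ℚ_[p]) - (θ : ℚ_[p])‖ = (p : ℝ) ^ (-s) := by
      rw [hform, Padic.add_eq_max_of_ne hnormne, hnormQ, hnormT]
      have : (p : ℝ) ^ (-(K' : ℤ)) < (p : ℝ) ^ (-s) := by
        apply zpow_lt_zpow_right₀ hp1; omega
      exact max_eq_right this.le
    have hne2 : ((n + T : ℕ) : ℚ_[p]) - (θ : ℚ_[p]) ≠ 0 := by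
      intro h; rw [h, norm_zero] at hnorm2
      exact absurd hnorm2.symm (ne_of_gt (by positivity))
    have hv2 : (((n + T : ℕ) : ℚ_[p]) - (θ : ℚ_[p])).valuation = s :=
      val_eq_of_norm hne2 hnorm2
    have := hper n hnN
    simp only at this
    rw [hval n _ hne1 hv1, hval (n + T) _ hne2 hv2] at this
    exact this.symm
  -- now derive contradiction
  have hK0 : s < ((s.toNat + 1 : ℕ) : ℤ) := by
    have := Int.self_le_toNat s; push_cast; omega
  have hK1 : s < ((s.toNat + 1 + t : ℕ) : ℤ) := by
    have := Int.self_le_toNat s; push_cast; omega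
  have h1 := hconst (s.toNat + 1) hK0
  have h2 := hconst (s.toNat + 1 + t) hK1
  have hdiv : (c.valuation + m * ((s.toNat + 1 + t : ℕ) : ℤ)) / t
      = (c.valuation + m * ((s.toNat + 1 : ℕ) : ℤ)) / t + m := by
    have ht0 : (t : ℤ) ≠ 0 := by exact_mod_cast (by omega : t ≠ 0)
    have : c.valuation + (m : ℤ) * ((s.toNat + 1 + t : ℕ) : ℤ)
        = (c.valuation + m * ((s.toNat + 1 : ℕ) : ℤ)) + m * t := by push_cast; ring
    rw [this, Int.add_mul_ediv_right _ _ ht0]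
  rw [hdiv] at h2
  rw [← h1] at h2
  have hm0 : ((m : ℤ) : ZMod u) = 0 := by
    have := h2
    push_cast at this ⊢
    linear_combination this
  rw [Int.cast_natCast, ZMod.natCast_eq_zero_iff] at hm0
  exact hum hm0
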